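/- Common-core existence: In a layered DAG with n = 3f+1 nodes per round where every valid block at round r+1 references at least 2f+1 blocks of round r, for any round r there exists a block b at round r such that every valid block at round r+2 has a directed path (of length 2) to b. -/

import Mathlib

theorem common_core_exists {α : Type*} [DecidableEq α]
    (f : ℕ) (blocks honest : ℕ → Finset α)
    (ref : α → α → Prop) [∀ a b, Decidable (ref a b)]
    (hsize : ∀ r, (blocks r).card ≤ 3 * f + 1)
    (hhonest_sub : ∀ r, honest r ⊆ blocks r)
    (hhonest_card : ∀ r, 2 * f + 1 ≤ (honest r).card)
    (href : ∀ r, ∀ b ∈ blocks (r + 1),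
      2 * f + 1 ≤ ((blocks r).filter (fun c => ref b c)).card)
    (r : ℕ) :
    ∃ b ∈ blocks r, ∀ c ∈ blocks (r + 2),
      ∃ m ∈ blocks (r + 1), ref c m ∧ ref m b := by
  obtain ⟨S, hSsub, hScard⟩ := Finset.exists_subset_card_eq (hhonest_card r)
  obtain ⟨T, hTsub, hTcard⟩ := Finset.exists_subset_card_eq (hhonest_card (r+1))
  have hS_blocks : S ⊆ blocks r := hSsub.trans (hhonest_sub r)
  have hT_blocks : T ⊆ blocks (r+1) := hTsub.trans (hhonest_sub (r+1))
  -- each m in T references at least f+1 elements of S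
  have key : ∀ m ∈ T, f + 1 ≤ (S.filter (fun b => ref m b)).card := by
    intro m hm
    have h1 := href r m (hT_blocks hm)
    have hUnion : (((blocks r).filter (fun c => ref m c)) ∪ S).card ≤ 3*f+1 := by
      refine le_trans (Finset.card_le_card ?_) (hsize r)
      exact Finset.union_subset (Finset.filter_subset _ _) hS_blocks
    have hsum := Finset.card_union_add_card_inter ((blocks r).filter (fun c => ref m c)) S
    have hEq : ((blocks r).filter (fun c => ref m c)) ∩ S = S.filter (fun b => ref m b) := by
      ext x
      simp only [Finset.mem_inter, Finset.mem_filter]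
      constructor
      · rintro ⟨⟨_, h⟩, hx⟩; exact ⟨hx, h⟩
      · rintro ⟨hx, h⟩; exact ⟨⟨hS_blocks hx, h⟩, hx⟩
    rw [hEq] at hsum
    omega
  -- double counting
  have hswap : ∑ m ∈ T, (S.filter (fun b => ref m b)).card
      = ∑ b ∈ S, (T.filter (fun m => ref m b)).card := by
    simp only [Finset.card_filter]
    exact Finset.sum_comm
  have hlower : (2*f+1) * (f+1) ≤ ∑ b ∈ S, (T.filter (fun m => ref m b)).card := by
    rw [← hswap]
    calc (2*f+1) * (f+1) = ∑ _m ∈ T, (f+1) := by rw [Finset.sum_const, hTcard, smul_eq_mul]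
    _ ≤ ∑ m ∈ T, (S.filter (fun b => ref m b)).card := Finset.sum_le_sum key
  -- pigeonhole: some b in S has at least f+1 referencers in T
  have hpig : ∃ b ∈ S, f + 1 ≤ (T.filter (fun m => ref m b)).card := by
    by_contra h
    push_neg at h
    have : ∑ b ∈ S, (T.filter (fun m => ref m b)).card ≤ S.card * f :=
      Finset.sum_le_card_nsmul _ _ f (fun b hb => by have := h b hb; omega)
    rw [hScard] at this
    nlinarith
  obtain ⟨b, hbS, hbcount⟩ := hpig
  refine ⟨b, hS_blocks hbS, ?_⟩
  intro c hc
  have hA := href (r+1) c hc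
  set A := (blocks (r+1)).filter (fun m => ref c m) with hAdef
  set B := T.filter (fun m => ref m b) with hBdef
  have hB_blocks : B ⊆ blocks (r+1) := (Finset.filter_subset _ _).trans hT_blocks
  have hU : (A ∪ B).card ≤ 3*f+1 := by
    refine le_trans (Finset.card_le_card ?_) (hsize (r+1))
    exact Finset.union_subset (Finset.filter_subset _ _) hB_blocks
  have hsum := Finset.card_union_add_card_inter A B
  have hinter : 1 ≤ (A ∩ B).card := by omega
  obtain ⟨m, hm⟩ := Finset.card_pos.mp (by omega : 0 < (A ∩ B).card)
  rw [Finset.mem_inter] at hm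
  obtain ⟨hmA, hmB⟩ := hm
  rw [hAdef, Finset.mem_filter] at hmA
  rw [hBdef, Finset.mem_filter] at hmB
  exact ⟨m, hmA.1, hmA.2, hmB.2⟩
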